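/- Let E, A₁, A₂, x ∈ ℂ with x² + 1 ≠ 0, and define A₁' := ((x² − 1)A₁ − 2xA₂ + 4xE)/(x² + 1) and A₂' := (−2xA₁ − (x² − 1)A₂ + 4x²E)/(x² + 1). If A₁² + A₂² − 4EA₂ = 1 + 2DE for some D ∈ ℂ, then (A₁')² + (A₂')² − 4EA₂' = 1 + 2DE. Equivalently, the reflection map j preserves the circle A₁² + (A₂ − 2E)² = 1 + 2DE + 4E² on which the Laplace–Runge–Lenz vector moves. -/

import Mathlib

/-- The reflection map j preserves the circle A₁² + A₂² − 4EA₂ = 1 + 2DE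
on which the Laplace–Runge–Lenz vector moves. -/
theorem reflection_preserves_circle (D E A₁ A₂ x : ℂ) (hx : x ^ 2 + 1 ≠ 0)
    (A₁' A₂' : ℂ)
    (hA₁' : A₁' = ((x ^ 2 - 1) * A₁ - 2 * x * A₂ + 4 * x * E) / (x ^ 2 + 1))
    (hA₂' : A₂' = (-(2 * x * A₁) - (x ^ 2 - 1) * A₂ + 4 * x ^ 2 * E) / (x ^ 2 + 1))
    (hcirc : A₁ ^ 2 + A₂ ^ 2 - 4 * E * A₂ = 1 + 2 * D * E) :
    A₁' ^ 2 + A₂' ^ 2 - 4 * E * A₂' = 1 + 2 * D * E := by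
  subst hA₁' hA₂'
  field_simp
  linear_combination ((x^2+1)^2) * hcirc
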